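/- Let G and H be groups, φ : G → H a surjective group homomorphism, and S ⊆ G a finite subset satisfying conditions (H2), (H4) and (H6). Then for all f₁, f₂ ∈ H with f₂ ∈ P'⁺(f₁), there exist g₁, g₂ ∈ G with φ(g₁) = f₁, φ(g₂) = f₂ and g₂ ∈ P⁺(g₁), such that P'⁺(f₁) ∩ P'⁺(f₂) = φ(P⁺(g₁) ∩ P⁺(g₂)) and φ is injective on P⁺(g₁) ∩ P⁺(g₂); in particular the finite sets P'⁺(f₁) ∩ P'⁺(f₂) and P⁺(g₁) ∩ P⁺(g₂) have the same cardinality. -/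

import Mathlib

/-- Local perspective present `P⁺(g) = {g*a*b⁻¹ : a, b ∈ S}`. -/
def Pplus {G : Type*} [Group G] [DecidableEq G] (S : Finset G) (g : G) : Finset G :=
  (S ×ˢ S).image fun p => g * p.1 * p.2⁻¹

/-- `P'⁺(f) = {f*φ(a)*φ(b)⁻¹ : a, b ∈ S}` in the quotient. -/
def Pplus' {G H : Type*} [Group G] [Group H] [DecidableEq H] (φ : G →* H) (S : Finset G)
    (f : H) : Finset H :=
  (S ×ˢ S).image fun p => f * φ p.1 * (φ p.2)⁻¹

/-- Condition (H2): for all `a, b ∈ S`, `φ(a*b⁻¹) = 1 ↔ a*b⁻¹ = 1`. -/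
def CondH2 {G H : Type*} [Group G] [Group H] (φ : G →* H) (S : Finset G) : Prop :=
  ∀ a ∈ S, ∀ b ∈ S, (φ (a * b⁻¹) = 1 ↔ a * b⁻¹ = 1)

/-- Condition (H4): for all `a, b, c, d ∈ S`, `φ(a*b⁻¹*c*d⁻¹) = 1 ↔ a*b⁻¹*c*d⁻¹ = 1`. -/
def CondH4 {G H : Type*} [Group G] [Group H] (φ : G →* H) (S : Finset G) : Prop :=
  ∀ a ∈ S, ∀ b ∈ S, ∀ c ∈ S, ∀ d ∈ S,
    (φ (a * b⁻¹ * c * d⁻¹) = 1 ↔ a * b⁻¹ * c * d⁻¹ = 1)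

/-- Condition (H6): for all `a, b, c, d, e, f ∈ S`,
`φ(a*b⁻¹*c*d⁻¹*e*f⁻¹) = 1 ↔ a*b⁻¹*c*d⁻¹*e*f⁻¹ = 1`. -/
def CondH6 {G H : Type*} [Group G] [Group H] (φ : G →* H) (S : Finset G) : Prop :=
  ∀ a ∈ S, ∀ b ∈ S, ∀ c ∈ S, ∀ d ∈ S, ∀ e ∈ S, ∀ f ∈ S,
    (φ (a * b⁻¹ * c * d⁻¹ * e * f⁻¹) = 1 ↔ a * b⁻¹ * c * d⁻¹ * e * f⁻¹ = 1)

theorem perspective_intersections_of_quotient {G H : Type*} [Group G] [Group H]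
    [DecidableEq G] [DecidableEq H] (φ : G →* H) (S : Finset G)
    (hsurj : Function.Surjective φ) (h2 : CondH2 φ S) (h4 : CondH4 φ S) (h6 : CondH6 φ S)
    (f₁ f₂ : H) (hmem : f₂ ∈ Pplus' φ S f₁) :
    ∃ g₁ g₂ : G, φ g₁ = f₁ ∧ φ g₂ = f₂ ∧ g₂ ∈ Pplus S g₁ ∧
      Pplus' φ S f₁ ∩ Pplus' φ S f₂ = (Pplus S g₁ ∩ Pplus S g₂).image φ ∧
      Set.InjOn φ ((Pplus S g₁ ∩ Pplus S g₂ : Finset G) : Set G) ∧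
      (Pplus' φ S f₁ ∩ Pplus' φ S f₂).card = (Pplus S g₁ ∩ Pplus S g₂).card := by

  -- Choose g₁ with φ g₁ = f₁ and write f₂ = f₁ * φ a * (φ b)⁻¹.
  obtain ⟨g₁, rfl⟩ := hsurj f₁
  rw [Pplus', Finset.mem_image] at hmem
  obtain ⟨⟨a, b⟩, hab, rfl⟩ := hmem
  rw [Finset.mem_product] at hab
  obtain ⟨ha, hb⟩ := hab
  set g₂ := g₁ * a * b⁻¹ with hg₂
  have hφg₂ : φ g₂ = φ g₁ * φ a * (φ b)⁻¹ := by simp [hg₂]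
  have hdiv : ∀ x y : G, φ x = φ y ↔ φ (x * y⁻¹) = 1 := by
    intro x y
    rw [map_mul, map_inv, mul_inv_eq_one]
  have hPim : ∀ g : G, Pplus' φ S (φ g) = (Pplus S g).image φ := by
    intro g
    unfold Pplus Pplus'
    rw [Finset.image_image]
    apply Finset.image_congr
    intro p _
    simp [mul_assoc]
  -- injectivity of φ on Pplus S g for any g, from (H4)
  have hinjP : ∀ g : G, Set.InjOn φ ((Pplus S g : Finset G) : Set G) := by
    intro g x hx y hy hxy
    simp only [Pplus, Finset.coe_image, Set.mem_image, Finset.mem_coe,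
      Finset.mem_product] at hx hy
    obtain ⟨⟨c, d⟩, hcd, rfl⟩ := hx
    obtain ⟨⟨c', d'⟩, hcd', rfl⟩ := hy
    rw [hdiv] at hxy
    have hw : g * c * d⁻¹ * (g * c' * d'⁻¹)⁻¹ = g * (c * d⁻¹ * d' * c'⁻¹) * g⁻¹ := by
      group
    rw [hw, map_mul, map_mul, map_inv, mul_inv_eq_one, mul_eq_left] at hxy
    have hone := (h4 c hcd.1 d hcd.2 d' hcd'.2 c' hcd'.1).mp hxy
    have : g * c * d⁻¹ * (g * c' * d'⁻¹)⁻¹ = 1 := by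
      rw [hw, hone]; group
    rwa [mul_inv_eq_one] at this
  have hinjInter : Set.InjOn φ ((Pplus S g₁ ∩ Pplus S g₂ : Finset G) : Set G) :=
    (hinjP g₁).mono (by rw [Finset.coe_inter]; exact Set.inter_subset_left)
  have hinter : Pplus' φ S (φ g₁) ∩ Pplus' φ S (φ g₂)
      = (Pplus S g₁ ∩ Pplus S g₂).image φ := by
    rw [hPim, hPim]
    apply Finset.Subset.antisymm
    · intro x hx
      rw [Finset.mem_inter, Finset.mem_image, Finset.mem_image] at hx
      obtain ⟨⟨u, hu, rfl⟩, ⟨v, hv, hvx⟩⟩ := hx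
      rw [Pplus, Finset.mem_image] at hu hv
      obtain ⟨⟨c, d⟩, hcd, rfl⟩ := hu
      obtain ⟨⟨e, f⟩, hef, rfl⟩ := hv
      rw [Finset.mem_product] at hcd hef
      rw [hdiv] at hvx
      have hw : g₂ * e * f⁻¹ * (g₁ * c * d⁻¹)⁻¹
          = g₁ * (a * b⁻¹ * e * f⁻¹ * d * c⁻¹) * g₁⁻¹ := by
        rw [hg₂]; group
      rw [hw, map_mul, map_mul, map_inv, mul_inv_eq_one, mul_eq_left] at hvx
      have hone := (h6 a ha b hb e hef.1 f hef.2 d hcd.2 c hcd.1).mp hvx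
      have heq : g₂ * e * f⁻¹ = g₁ * c * d⁻¹ := by
        have : g₂ * e * f⁻¹ * (g₁ * c * d⁻¹)⁻¹ = 1 := by
          rw [hw, hone]; group
        rwa [mul_inv_eq_one] at this
      rw [Finset.mem_image]
      refine ⟨g₁ * c * d⁻¹, ?_, rfl⟩
      rw [Finset.mem_inter]
      refine ⟨Finset.mem_image.mpr ⟨(c, d), Finset.mem_product.mpr hcd, rfl⟩, ?_⟩
      rw [← heq]
      exact Finset.mem_image.mpr ⟨(e, f), Finset.mem_product.mpr hef, rfl⟩
    · exact Finset.image_inter_subset _ _ _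
  refine ⟨g₁, g₂, rfl, ?_, ?_, ?_, hinjInter, ?_⟩
  · simpa using hφg₂
  · exact Finset.mem_image.mpr ⟨(a, b), Finset.mem_product.mpr ⟨ha, hb⟩, rfl⟩
  · have hf : (φ g₁ * φ (a, b).1 * (φ (a, b).2)⁻¹ : H) = φ g₂ := hφg₂.symm
    rw [hf]
    exact hinter
  · have hf : (φ g₁ * φ (a, b).1 * (φ (a, b).2)⁻¹ : H) = φ g₂ := hφg₂.symm
    rw [hf, hinter]
    exact Finset.card_image_of_injOn hinjInter
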